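/- Let α, β > -1 be real numbers, let n > m > 4 be integers with n ≥ 2, and let p_0,…,p_n ∈ ℝ^d with P_n(t) := Σ_{i=0}^{n} p_i B_i^n(t). For real parameters λ_1, λ_2, μ_1, μ_2, define the boundary control points r_0 := p_0, r_1 := p_0 + (n/m)λ_1 Δp_0, r_2 := p_0 + (n/m)[2λ_1 + λ_2/(m-1)]Δp_0 + ((n-1)_2/(m-1)_2)λ_1² Δ²p_0, r_{m-2} := p_n - (n/m)[2μ_1 - μ_2/(m-1)]Δp_{n-1} + ((n-1)_2/(m-1)_2)μ_1² Δ²p_{n-2}, r_{m-1} := p_n - (n/m)μ_1 Δp_{n-1}, r_m := p_n, and define the inner control points r_3,…,r_{m-3} to be the unique minimizers of E(λ_1,λ_2,μ_1,μ_2) := ∫₀¹ (1-t)^α t^β ‖P_n(t) - Σ_{i=0}^{m} r_i B_i^m(t)‖² dt for these fixed boundary points (via the constrained dual Bernstein basis of Π_m^{(2,2)}). Then the function (λ_1,λ_2,μ_1,μ_2) ↦ E(λ_1,λ_2,μ_1,μ_2) is a polynomial function of total degree at most 4. -/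

import Mathlib

open MeasureTheory Polynomial

/-- Bernstein polynomial `B_i^n(t) = C(n,i) t^i (1-t)^{n-i}` as a real function. -/
noncomputable def bern (n i : ℕ) (t : ℝ) : ℝ := (n.choose i : ℝ) * t ^ i * (1 - t) ^ (n - i)

/-- Pochhammer symbol `(a)_k = a(a+1)⋯(a+k-1)`. -/
noncomputable def poch (a : ℝ) (k : ℕ) : ℝ := (ascPochhammer ℝ k).eval a

/-- Binomial coefficient `C(u,v)` for an integer `v`, with the convention that it
vanishes when `v < 0` or `v > u`. -/
noncomputable def chZ (u : ℕ) (v : ℤ) : ℝ := if 0 ≤ v then (u.choose v.toNat : ℝ) else 0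

/-- Forward difference operator: `fdiff q k i = Δ^k q_i`. -/
def fdiff {E : Type*} [AddCommGroup E] (q : ℕ → E) : ℕ → ℕ → E
  | 0, i => q i
  | k + 1, i => fdiff q k (i + 1) - fdiff q k i

/-- The inner product `⟨f,g⟩_{α,β} = ∫₀¹ (1-t)^α t^β f(t) g(t) dt`. -/
noncomputable def jacobiInner (α β : ℝ) (f g : Polynomial ℝ) : ℝ :=
  ∫ t in (0:ℝ)..1, (1 - t) ^ α * t ^ β * (f.eval t * g.eval t)

/-- The linear functional `p ↦ (d^i/dt^i p)(x)` on real polynomials. -/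
noncomputable def evalDeriv (x : ℝ) (i : ℕ) : Polynomial ℝ →ₗ[ℝ] ℝ :=
  (Polynomial.leval x).comp
    (((Polynomial.derivative : Module.End ℝ (Polynomial ℝ)) ^ i : Module.End ℝ (Polynomial ℝ)))

/-- The space `Π_m^{(k,l)}`. -/
noncomputable def PiSpace (m : ℕ) (k l : ℤ) : Submodule ℝ (Polynomial ℝ) :=
  Polynomial.degreeLE ℝ (m : ℕ) ⊓
    (⨅ i ∈ {i : ℕ | (i : ℤ) ≤ k}, LinearMap.ker (evalDeriv 0 i)) ⊓
    (⨅ j ∈ {j : ℕ | (j : ℤ) ≤ l}, LinearMap.ker (evalDeriv 1 j))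

/-! ### Auxiliary definitions and lemmas -/

/-- A 7-tuple as a function on `Fin 7`. -/
def vec7 {α : Sort*} (a0 a1 a2 a3 a4 a5 a6 : α) : Fin 7 → α
  | ⟨0, _⟩ => a0
  | ⟨1, _⟩ => a1
  | ⟨2, _⟩ => a2
  | ⟨3, _⟩ => a3
  | ⟨4, _⟩ => a4
  | ⟨5, _⟩ => a5
  | ⟨6, _⟩ => a6

section vec7simp
variable {α : Sort*} (a0 a1 a2 a3 a4 a5 a6 : α)
@[simp] lemma vec7_0 : vec7 a0 a1 a2 a3 a4 a5 a6 0 = a0 := rfl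
@[simp] lemma vec7_1 : vec7 a0 a1 a2 a3 a4 a5 a6 1 = a1 := rfl
@[simp] lemma vec7_2 : vec7 a0 a1 a2 a3 a4 a5 a6 2 = a2 := rfl
@[simp] lemma vec7_3 : vec7 a0 a1 a2 a3 a4 a5 a6 3 = a3 := rfl
@[simp] lemma vec7_4 : vec7 a0 a1 a2 a3 a4 a5 a6 4 = a4 := rfl
@[simp] lemma vec7_5 : vec7 a0 a1 a2 a3 a4 a5 a6 5 = a5 := rfl
@[simp] lemma vec7_6 : vec7 a0 a1 a2 a3 a4 a5 a6 6 = a6 := rfl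
end vec7simp

/-- The seven monomials `1, λ₁, λ₂, μ₁, μ₂, λ₁², μ₁²`. -/
noncomputable def mon7 (l1 l2 u1 u2 : ℝ) : Fin 7 → ℝ := vec7 1 l1 l2 u1 u2 (l1 ^ 2) (u1 ^ 2)

/-- Coefficient vectors of the boundary control points w.r.t. the monomials `mon7`. -/
noncomputable def bdry {d : ℕ} (n m : ℕ) (p : ℕ → EuclideanSpace ℝ (Fin d)) (i : ℕ) :
    Fin 7 → EuclideanSpace ℝ (Fin d) :=
  if i = 0 then vec7 (p 0) 0 0 0 0 0 0
  else if i = 1 then vec7 (p 0) (((n : ℝ) / (m : ℝ)) • fdiff p 1 0) 0 0 0 0 0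
  else if i = 2 then
    vec7 (p 0) (((n : ℝ) / (m : ℝ) * 2) • fdiff p 1 0)
      (((n : ℝ) / (m : ℝ) / ((m : ℝ) - 1)) • fdiff p 1 0) 0 0
      ((poch ((n : ℝ) - 1) 2 / poch ((m : ℝ) - 1) 2) • fdiff p 2 0) 0
  else if i = m - 2 then
    vec7 (p n) 0 0 ((-((n : ℝ) / (m : ℝ) * 2)) • fdiff p 1 (n - 1))
      (((n : ℝ) / (m : ℝ) / ((m : ℝ) - 1)) • fdiff p 1 (n - 1)) 0
      ((poch ((n : ℝ) - 1) 2 / poch ((m : ℝ) - 1) 2) • fdiff p 2 (n - 2))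
  else if i = m - 1 then vec7 (p n) 0 0 ((-((n : ℝ) / (m : ℝ))) • fdiff p 1 (n - 1)) 0 0 0
  else if i = m then vec7 (p n) 0 0 0 0 0 0
  else 0

/-- Coefficient vectors of all control points w.r.t. the monomials `mon7`. -/
noncomputable def acoef {d : ℕ} (α β : ℝ) (n m : ℕ) (p : ℕ → EuclideanSpace ℝ (Fin d))
    (D : ℕ → Polynomial ℝ) (k : Fin 7) (i : ℕ) : EuclideanSpace ℝ (Fin d) :=
  if 3 ≤ i ∧ i ≤ m - 3 then
    ∑ j ∈ Finset.range (n + 1),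
      jacobiInner α β (bernsteinPolynomial ℝ n j) (D i) •
        ((if k = 0 then p j else 0) - ((n.choose j : ℝ))⁻¹ •
          ∑ h ∈ (Finset.range (m + 1)).filter (fun h : ℕ => h ≤ 2 ∨ m - 2 ≤ h),
            (chZ (n - m) ((j : ℤ) - (h : ℤ)) * (m.choose h : ℝ)) • bdry n m p h k)
  else bdry n m p i k


section bdryeval
variable {d : ℕ} (n m : ℕ) (p : ℕ → EuclideanSpace ℝ (Fin d))

lemma bdry_zero : bdry n m p 0 = vec7 (p 0) 0 0 0 0 0 0 := by simp [bdry]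

lemma bdry_one (hm : 4 < m) : bdry n m p 1 =
    vec7 (p 0) (((n : ℝ) / (m : ℝ)) • fdiff p 1 0) 0 0 0 0 0 := by
  unfold bdry; rw [if_neg (by omega), if_pos rfl]

lemma bdry_two (hm : 4 < m) : bdry n m p 2 =
    vec7 (p 0) (((n : ℝ) / (m : ℝ) * 2) • fdiff p 1 0)
      (((n : ℝ) / (m : ℝ) / ((m : ℝ) - 1)) • fdiff p 1 0) 0 0
      ((poch ((n : ℝ) - 1) 2 / poch ((m : ℝ) - 1) 2) • fdiff p 2 0) 0 := by
  unfold bdry; rw [if_neg (by omega), if_neg (by omega), if_pos rfl]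

lemma bdry_m2 (hm : 4 < m) : bdry n m p (m - 2) =
    vec7 (p n) 0 0 ((-((n : ℝ) / (m : ℝ) * 2)) • fdiff p 1 (n - 1))
      (((n : ℝ) / (m : ℝ) / ((m : ℝ) - 1)) • fdiff p 1 (n - 1)) 0
      ((poch ((n : ℝ) - 1) 2 / poch ((m : ℝ) - 1) 2) • fdiff p 2 (n - 2)) := by
  unfold bdry
  rw [if_neg (by omega), if_neg (by omega), if_neg (by omega), if_pos rfl]

lemma bdry_m1 (hm : 4 < m) : bdry n m p (m - 1) =
    vec7 (p n) 0 0 ((-((n : ℝ) / (m : ℝ))) • fdiff p 1 (n - 1)) 0 0 0 := by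
  unfold bdry
  rw [if_neg (by omega), if_neg (by omega), if_neg (by omega), if_neg (by omega), if_pos rfl]

lemma bdry_m (hm : 4 < m) : bdry n m p m = vec7 (p n) 0 0 0 0 0 0 := by
  unfold bdry
  rw [if_neg (by omega), if_neg (by omega), if_neg (by omega), if_neg (by omega),
    if_neg (by omega), if_pos rfl]

end bdryeval

/-- Coefficient (vector-valued) functions of the error w.r.t. the monomials `mon7`. -/
noncomputable def uf {d : ℕ} (α β : ℝ) (n m : ℕ) (p : ℕ → EuclideanSpace ℝ (Fin d))
    (D : ℕ → Polynomial ℝ) (k : Fin 7) (t : ℝ) : EuclideanSpace ℝ (Fin d) :=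
  (if k = 0 then ∑ i ∈ Finset.range (n + 1), bern n i t • p i else 0)
    - ∑ i ∈ Finset.range (m + 1), bern m i t • acoef α β n m p D k i

lemma weight_integrable {α β : ℝ} (hα : -1 < α) (hβ : -1 < β) :
    IntervalIntegrable (fun t : ℝ => (1 - t) ^ α * t ^ β) volume 0 1 := by
  have h1 : IntervalIntegrable (fun t : ℝ => t ^ β) volume 0 1 :=
    intervalIntegral.intervalIntegrable_rpow' hβ
  have h2 : IntervalIntegrable (fun t : ℝ => (1 - t) ^ α) volume 0 1 := by
    have := (intervalIntegral.intervalIntegrable_rpow' (a := 0) (b := 1) hα).comp_sub_left 1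
    norm_num at this
    exact this.symm
  have ha : IntervalIntegrable (fun t : ℝ => (1 - t) ^ α * t ^ β) volume 0 (1/2) := by
    refine (h1.mono_set ?_).continuousOn_mul ?_
    · rw [Set.uIcc_of_le (by norm_num), Set.uIcc_of_le (by norm_num)]
      exact Set.Icc_subset_Icc le_rfl (by norm_num)
    · refine ContinuousOn.rpow_const (by fun_prop) fun x hx => ?_
      rw [Set.uIcc_of_le (by norm_num)] at hx
      left; intro hc; rw [sub_eq_zero] at hc; have := hx.2; rw [← hc] at this; norm_num at this
  have hb : IntervalIntegrable (fun t : ℝ => (1 - t) ^ α * t ^ β) volume (1/2) 1 := by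
    refine (h2.mono_set ?_).mul_continuousOn ?_
    · rw [Set.uIcc_of_le (by norm_num), Set.uIcc_of_le (by norm_num)]
      exact Set.Icc_subset_Icc (by norm_num) le_rfl
    · refine ContinuousOn.rpow_const (by fun_prop) fun x hx => ?_
      rw [Set.uIcc_of_le (by norm_num)] at hx
      left; intro hc; rw [hc] at hx; have := hx.1; norm_num at this
  exact ha.trans hb

lemma norm_sq_expand {E : Type*} [NormedAddCommGroup E] [InnerProductSpace ℝ E]
    (c : Fin 7 → ℝ) (v : Fin 7 → E) :
    ‖∑ k : Fin 7, c k • v k‖ ^ 2 =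
      ∑ k : Fin 7, ∑ l : Fin 7, (c k * c l) * (inner ℝ (v k) (v l) : ℝ) := by
  rw [← real_inner_self_eq_norm_sq, sum_inner]
  refine Finset.sum_congr rfl fun k _ => ?_
  rw [inner_sum]
  refine Finset.sum_congr rfl fun l _ => ?_
  rw [real_inner_smul_left, real_inner_smul_right]; ring

theorem stmt16 (α β : ℝ) (hα : -1 < α) (hβ : -1 < β) (d n m : ℕ)
    (hm : 4 < m) (hmn : m < n) (hn : 2 ≤ n)
    (p : ℕ → EuclideanSpace ℝ (Fin d))
    -- the constrained dual Bernstein basis of `Π_m^{(2,2)}`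
    (D : ℕ → Polynomial ℝ)
    (hDmem : ∀ i : ℕ, 3 ≤ i → i ≤ m - 3 → D i ∈ PiSpace m 2 2)
    (hdual : ∀ i j : ℕ, 3 ≤ i → i ≤ m - 3 → 3 ≤ j → j ≤ m - 3 →
      jacobiInner α β (D i) (bernsteinPolynomial ℝ m j) = if i = j then 1 else 0)
    -- the control points, as functions of the parameters λ₁, λ₂, μ₁, μ₂:
    (rf : ℝ → ℝ → ℝ → ℝ → ℕ → EuclideanSpace ℝ (Fin d))
    -- boundary control points
    (hr0 : ∀ lam1 lam2 mu1 mu2 : ℝ, rf lam1 lam2 mu1 mu2 0 = p 0)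
    (hr1 : ∀ lam1 lam2 mu1 mu2 : ℝ,
      rf lam1 lam2 mu1 mu2 1 = p 0 + ((n : ℝ) / (m : ℝ) * lam1) • fdiff p 1 0)
    (hr2 : ∀ lam1 lam2 mu1 mu2 : ℝ,
      rf lam1 lam2 mu1 mu2 2 = p 0 +
        ((n : ℝ) / (m : ℝ) * (2 * lam1 + lam2 / ((m : ℝ) - 1))) • fdiff p 1 0 +
        (poch ((n : ℝ) - 1) 2 / poch ((m : ℝ) - 1) 2 * lam1 ^ 2) • fdiff p 2 0)
    (hrm2 : ∀ lam1 lam2 mu1 mu2 : ℝ,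
      rf lam1 lam2 mu1 mu2 (m - 2) = p n -
        ((n : ℝ) / (m : ℝ) * (2 * mu1 - mu2 / ((m : ℝ) - 1))) • fdiff p 1 (n - 1) +
        (poch ((n : ℝ) - 1) 2 / poch ((m : ℝ) - 1) 2 * mu1 ^ 2) • fdiff p 2 (n - 2))
    (hrm1 : ∀ lam1 lam2 mu1 mu2 : ℝ,
      rf lam1 lam2 mu1 mu2 (m - 1) = p n - ((n : ℝ) / (m : ℝ) * mu1) • fdiff p 1 (n - 1))
    (hrm : ∀ lam1 lam2 mu1 mu2 : ℝ, rf lam1 lam2 mu1 mu2 m = p n)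
    -- inner control points: the unique minimizers for the fixed boundary points,
    -- given via the constrained dual Bernstein basis
    (hrin : ∀ (lam1 lam2 mu1 mu2 : ℝ) (i : ℕ), 3 ≤ i → i ≤ m - 3 →
      rf lam1 lam2 mu1 mu2 i = ∑ j ∈ Finset.range (n + 1),
        jacobiInner α β (bernsteinPolynomial ℝ n j) (D i) •
          (p j - ((n.choose j : ℝ))⁻¹ •
            ∑ h ∈ (Finset.range (m + 1)).filter (fun h : ℕ => h ≤ 2 ∨ m - 2 ≤ h),
              (chZ (n - m) ((j : ℤ) - (h : ℤ)) * (m.choose h : ℝ)) •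
                rf lam1 lam2 mu1 mu2 h)) :
    -- the error `E(λ₁, λ₂, μ₁, μ₂)` is a polynomial function of total degree at most 4
    ∃ F : MvPolynomial (Fin 4) ℝ, F.totalDegree ≤ 4 ∧
      ∀ lam1 lam2 mu1 mu2 : ℝ,
        (∫ t in (0:ℝ)..1, (1 - t) ^ α * t ^ β *
            ‖(∑ i ∈ Finset.range (n + 1), bern n i t • p i) -
              (∑ i ∈ Finset.range (m + 1), bern m i t • rf lam1 lam2 mu1 mu2 i)‖ ^ 2) =
          MvPolynomial.eval ![lam1, lam2, mu1, mu2] F := by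
  classical
  -- boundary control points expand in the monomials
  have hbdry : ∀ (l1 l2 u1 u2 : ℝ) (h : ℕ), h ≤ m → (h ≤ 2 ∨ m - 2 ≤ h) →
      rf l1 l2 u1 u2 h = ∑ k : Fin 7, mon7 l1 l2 u1 u2 k • bdry n m p h k := by
    intro l1 l2 u1 u2 h hhm hcond
    have hcases : h = 0 ∨ h = 1 ∨ h = 2 ∨ h = m - 2 ∨ h = m - 1 ∨ h = m := by omega
    rcases hcases with h0 | h0 | h0 | h0 | h0 | h0 <;> rw [h0]
    · rw [hr0, bdry_zero, Fin.sum_univ_seven]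
      simp only [mon7, vec7_0, vec7_1, vec7_2, vec7_3, vec7_4, vec7_5, vec7_6, smul_zero,
        add_zero, zero_add, one_smul]
    · rw [hr1, bdry_one n m p hm, Fin.sum_univ_seven]
      simp only [mon7, vec7_0, vec7_1, vec7_2, vec7_3, vec7_4, vec7_5, vec7_6, smul_zero,
        add_zero, zero_add, one_smul]
      module
    · rw [hr2, bdry_two n m p hm, Fin.sum_univ_seven]
      simp only [mon7, vec7_0, vec7_1, vec7_2, vec7_3, vec7_4, vec7_5, vec7_6, smul_zero,
        add_zero, zero_add, one_smul]
      rw [show (n : ℝ) / (m : ℝ) * (2 * l1 + l2 / ((m : ℝ) - 1))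
          = l1 * ((n : ℝ) / (m : ℝ) * 2) + l2 * ((n : ℝ) / (m : ℝ) / ((m : ℝ) - 1)) by ring]
      module
    · rw [hrm2, bdry_m2 n m p hm, Fin.sum_univ_seven]
      simp only [mon7, vec7_0, vec7_1, vec7_2, vec7_3, vec7_4, vec7_5, vec7_6, smul_zero,
        add_zero, zero_add, one_smul]
      rw [show (n : ℝ) / (m : ℝ) * (2 * u1 - u2 / ((m : ℝ) - 1))
          = u1 * ((n : ℝ) / (m : ℝ) * 2) - u2 * ((n : ℝ) / (m : ℝ) / ((m : ℝ) - 1)) by ring]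
      module
    · rw [hrm1, bdry_m1 n m p hm, Fin.sum_univ_seven]
      simp only [mon7, vec7_0, vec7_1, vec7_2, vec7_3, vec7_4, vec7_5, vec7_6, smul_zero,
        add_zero, zero_add, one_smul]
      module
    · rw [hrm, bdry_m n m p hm, Fin.sum_univ_seven]
      simp only [mon7, vec7_0, vec7_1, vec7_2, vec7_3, vec7_4, vec7_5, vec7_6, smul_zero,
        add_zero, zero_add, one_smul]
  -- all control points expand in the monomials
  have key : ∀ (l1 l2 u1 u2 : ℝ) (i : ℕ), i ≤ m →
      rf l1 l2 u1 u2 i = ∑ k : Fin 7, mon7 l1 l2 u1 u2 k • acoef α β n m p D k i := by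
    intro l1 l2 u1 u2 i him
    by_cases hio : 3 ≤ i ∧ i ≤ m - 3
    · rw [hrin l1 l2 u1 u2 i hio.1 hio.2]
      have hveck : ∀ j : ℕ,
          (p j - ((n.choose j : ℝ))⁻¹ •
            ∑ h ∈ (Finset.range (m + 1)).filter (fun h : ℕ => h ≤ 2 ∨ m - 2 ≤ h),
              (chZ (n - m) ((j : ℤ) - (h : ℤ)) * (m.choose h : ℝ)) • rf l1 l2 u1 u2 h)
          = ∑ k : Fin 7, mon7 l1 l2 u1 u2 k •
              ((if k = 0 then p j else 0) - ((n.choose j : ℝ))⁻¹ •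
                ∑ h ∈ (Finset.range (m + 1)).filter (fun h : ℕ => h ≤ 2 ∨ m - 2 ≤ h),
                  (chZ (n - m) ((j : ℤ) - (h : ℤ)) * (m.choose h : ℝ)) • bdry n m p h k) := by
        intro j
        rw [Finset.sum_congr rfl fun k _ => smul_sub (mon7 l1 l2 u1 u2 k) _ _,
          Finset.sum_sub_distrib]
        congr 1
        · rw [Fin.sum_univ_seven]
          simp [mon7]
        · simp_rw [smul_comm _ (((n.choose j : ℕ) : ℝ))⁻¹]
          rw [← Finset.smul_sum]
          congr 1
          have hrw : ∀ h ∈ (Finset.range (m + 1)).filter (fun h : ℕ => h ≤ 2 ∨ m - 2 ≤ h),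
              (chZ (n - m) ((j : ℤ) - (h : ℤ)) * (m.choose h : ℝ)) • rf l1 l2 u1 u2 h
              = (chZ (n - m) ((j : ℤ) - (h : ℤ)) * (m.choose h : ℝ)) •
                  ∑ k : Fin 7, mon7 l1 l2 u1 u2 k • bdry n m p h k := by
            intro h hh
            rw [Finset.mem_filter, Finset.mem_range] at hh
            rw [hbdry l1 l2 u1 u2 h (by omega) hh.2]
          rw [Finset.sum_congr rfl hrw]
          simp_rw [Finset.smul_sum, smul_smul]
          rw [Finset.sum_comm]
          exact Finset.sum_congr rfl fun k _ => Finset.sum_congr rfl fun h _ => by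
            rw [mul_comm]
      rw [Finset.sum_congr rfl fun j _ => by rw [hveck j]]
      simp only [acoef, if_pos hio]
      simp_rw [Finset.smul_sum, smul_smul]
      rw [Finset.sum_comm]
      exact Finset.sum_congr rfl fun k _ => Finset.sum_congr rfl fun j _ => by rw [mul_comm]
    · have hcond : i ≤ 2 ∨ m - 2 ≤ i := by omega
      rw [hbdry l1 l2 u1 u2 i him hcond]
      exact Finset.sum_congr rfl fun k _ => by rw [acoef, if_neg hio]
  -- the error decomposes over the monomials
  have herr : ∀ (l1 l2 u1 u2 t : ℝ),
      ((∑ i ∈ Finset.range (n + 1), bern n i t • p i) -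
        (∑ i ∈ Finset.range (m + 1), bern m i t • rf l1 l2 u1 u2 i))
      = ∑ k : Fin 7, mon7 l1 l2 u1 u2 k • uf α β n m p D k t := by
    intro l1 l2 u1 u2 t
    simp_rw [uf, smul_sub]
    rw [Finset.sum_sub_distrib]
    congr 1
    · rw [Fin.sum_univ_seven]
      simp [mon7]
    · have hrw : ∀ i ∈ Finset.range (m + 1),
          bern m i t • rf l1 l2 u1 u2 i
          = bern m i t • ∑ k : Fin 7, mon7 l1 l2 u1 u2 k • acoef α β n m p D k i := by
        intro i hi
        rw [Finset.mem_range] at hi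
        rw [key l1 l2 u1 u2 i (by omega)]
      rw [Finset.sum_congr rfl hrw]
      simp_rw [Finset.smul_sum, smul_smul]
      rw [Finset.sum_comm]
      exact Finset.sum_congr rfl fun k _ => Finset.sum_congr rfl fun i _ => by rw [mul_comm]
  -- continuity of the coefficient functions
  have hbern : ∀ (N i : ℕ), Continuous (fun t : ℝ => bern N i t) := by
    intro N i; unfold bern; fun_prop
  have hucont : ∀ k : Fin 7, Continuous (uf α β n m p D k) := by
    intro k
    apply Continuous.sub
    · by_cases hk : k = 0
      · simp only [hk, if_pos rfl]
        exact continuous_finset_sum _ fun i _ => (hbern n i).smul continuous_const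
      · simp only [if_neg hk]
        exact continuous_const
    · exact continuous_finset_sum _ fun i _ => (hbern m i).smul continuous_const
  have hgcont : ∀ k l : Fin 7, Continuous
      (fun t : ℝ => (inner ℝ (uf α β n m p D k t) (uf α β n m p D l t) : ℝ)) :=
    fun k l => Continuous.inner (hucont k) (hucont l)
  -- integrability of each piece
  have hIkl : ∀ k l : Fin 7, IntervalIntegrable
      (fun t : ℝ => (1 - t) ^ α * t ^ β *
        (inner ℝ (uf α β n m p D k t) (uf α β n m p D l t) : ℝ)) volume 0 1 :=
    fun k l => (weight_integrable hα hβ).mul_continuousOn ((hgcont k l).continuousOn)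
  -- the coefficients of the polynomial
  set I : Fin 7 → Fin 7 → ℝ := fun k l => ∫ t in (0:ℝ)..1,
    (1 - t) ^ α * t ^ β * (inner ℝ (uf α β n m p D k t) (uf α β n m p D l t) : ℝ) with hI
  set M : Fin 7 → MvPolynomial (Fin 4) ℝ := vec7 1 (MvPolynomial.X 0) (MvPolynomial.X 1)
    (MvPolynomial.X 2) (MvPolynomial.X 3) (MvPolynomial.X 0 ^ 2) (MvPolynomial.X 2 ^ 2) with hM
  have hMdeg : ∀ k : Fin 7, (M k).totalDegree ≤ 2 := by
    intro k
    fin_cases k <;>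
      simp only [hM, vec7_0, vec7_1, vec7_2, vec7_3, vec7_4, vec7_5, vec7_6] <;>
      first
        | simp [MvPolynomial.totalDegree_one]
        | simp [MvPolynomial.totalDegree_X]
        | exact le_trans (MvPolynomial.totalDegree_pow _ _)
            (by simp [MvPolynomial.totalDegree_X])
  have hMeval : ∀ (l1 l2 u1 u2 : ℝ) (k : Fin 7),
      MvPolynomial.eval ![l1, l2, u1, u2] (M k) = mon7 l1 l2 u1 u2 k := by
    intro l1 l2 u1 u2 k
    fin_cases k <;>
      simp [hM, mon7, map_pow]
  refine ⟨∑ k : Fin 7, ∑ l : Fin 7, MvPolynomial.C (I k l) * (M k * M l), ?_, ?_⟩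
  · refine le_trans (MvPolynomial.totalDegree_finset_sum _ _) ?_
    refine Finset.sup_le fun k _ => ?_
    refine le_trans (MvPolynomial.totalDegree_finset_sum _ _) ?_
    refine Finset.sup_le fun l _ => ?_
    refine le_trans (MvPolynomial.totalDegree_mul _ _) ?_
    rw [MvPolynomial.totalDegree_C]
    refine le_trans (Nat.zero_add _).le ?_
    exact le_trans (MvPolynomial.totalDegree_mul _ _)
      (le_trans (add_le_add (hMdeg k) (hMdeg l)) (by norm_num))
  · intro l1 l2 u1 u2
    have hfun : (fun t : ℝ => (1 - t) ^ α * t ^ β *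
        ‖(∑ i ∈ Finset.range (n + 1), bern n i t • p i) -
          (∑ i ∈ Finset.range (m + 1), bern m i t • rf l1 l2 u1 u2 i)‖ ^ 2)
        = fun t : ℝ => ∑ k : Fin 7, ∑ l : Fin 7,
            (mon7 l1 l2 u1 u2 k * mon7 l1 l2 u1 u2 l) *
              ((1 - t) ^ α * t ^ β *
                (inner ℝ (uf α β n m p D k t) (uf α β n m p D l t) : ℝ)) := by
      funext t
      rw [herr l1 l2 u1 u2 t, norm_sq_expand]
      rw [Finset.mul_sum]
      refine Finset.sum_congr rfl fun k _ => ?_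
      rw [Finset.mul_sum]
      refine Finset.sum_congr rfl fun l _ => ?_
      ring
    rw [hfun]
    have h1 : ∀ k : Fin 7, IntervalIntegrable
        (fun t : ℝ => ∑ l : Fin 7, (mon7 l1 l2 u1 u2 k * mon7 l1 l2 u1 u2 l) *
          ((1 - t) ^ α * t ^ β *
            (inner ℝ (uf α β n m p D k t) (uf α β n m p D l t) : ℝ))) volume 0 1 := by
      intro k
      rw [show (fun t : ℝ => ∑ l : Fin 7, (mon7 l1 l2 u1 u2 k * mon7 l1 l2 u1 u2 l) *
          ((1 - t) ^ α * t ^ β *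
            (inner ℝ (uf α β n m p D k t) (uf α β n m p D l t) : ℝ)))
        = ∑ l : Fin 7, (fun t : ℝ => (mon7 l1 l2 u1 u2 k * mon7 l1 l2 u1 u2 l) *
            ((1 - t) ^ α * t ^ β *
              (inner ℝ (uf α β n m p D k t) (uf α β n m p D l t) : ℝ))) from
          funext fun t => by rw [Finset.sum_apply]]
      exact IntervalIntegrable.sum _ fun l _ => (hIkl k l).const_mul _
    rw [intervalIntegral.integral_finset_sum (fun k (_ : k ∈ Finset.univ) => h1 k)]
    rw [Finset.sum_congr rfl fun k (_ : k ∈ Finset.univ) =>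
      intervalIntegral.integral_finset_sum (fun l (_ : l ∈ Finset.univ) =>
        (hIkl k l).const_mul (mon7 l1 l2 u1 u2 k * mon7 l1 l2 u1 u2 l))]
    simp_rw [intervalIntegral.integral_const_mul]
    rw [map_sum]
    refine Finset.sum_congr rfl fun k _ => ?_
    rw [map_sum]
    refine Finset.sum_congr rfl fun l _ => ?_
    rw [map_mul, map_mul, MvPolynomial.eval_C, hMeval, hMeval, hI]
    ring
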